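/- For every arrow α ∈ Q₁ one has the relation x(α)·x(g(α))·x(f(g(α))) = c(f(α))·x(α)·x(f(α))·x(g(f(α)))·x(g²(f(α)))⋯x(g^{n_{f(α)}−2}(f(α))) in A. -/
import Mathlib


/-- The product `x α * x (g α) * ⋯ * x (g^[m-1] α)` of `m` factors along the `g`-orbit,
read left to right (the empty product for `m = 0` is `1`). -/
def gpath {Q₁ A : Type} [Ring A] (x : Q₁ → A) (g : Q₁ → Q₁) (α : Q₁) (m : ℕ) : A :=
  ((List.range m).map fun i => x (g^[i] α)).prod

lemma gpath_succ {Q₁ A : Type} [Ring A] (x : Q₁ → A) (g : Q₁ → Q₁) (α : Q₁) (m : ℕ) :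
    gpath x g α (m + 1) = x α * gpath x g (g α) m := by
  unfold gpath
  rw [List.range_succ_eq_map, List.map_cons, List.prod_cons, List.map_map]
  simp only [Function.comp_def, Function.iterate_succ_apply, Function.iterate_zero_apply]

theorem stmt_12
  {Q₀ Q₁ : Type} [Fintype Q₀] [Fintype Q₁] [DecidableEq Q₀] [DecidableEq Q₁]
  [Nonempty Q₀] [Nonempty Q₁]
  (s t : Q₁ → Q₀)
  (hconn : ∀ u v : Q₀, Relation.EqvGen (fun a b => ∃ e : Q₁, s e = a ∧ t e = b) u v)
  (hnoloop : ∀ e : Q₁, s e ≠ t e)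
  (hno2cyc : ∀ e e' : Q₁, ¬ (s e = t e' ∧ t e = s e'))
  (hout : ∀ v : Q₀, (Finset.univ.filter fun e => s e = v).card = 2)
  (hin : ∀ v : Q₀, (Finset.univ.filter fun e => t e = v).card = 2)
  (f g : Q₁ ≃ Q₁)
  (hfg : ∀ α : Q₁, f α ≠ g α)
  (hsf : ∀ α : Q₁, s (f α) = t α)
  (hsg : ∀ α : Q₁, s (g α) = t α)
  (hf3 : ∀ α : Q₁, f (f (f α)) = α)
  (bar : Q₁ → Q₁)
  (hbar_ne : ∀ α : Q₁, bar α ≠ α)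
  (hbar_s : ∀ α : Q₁, s (bar α) = s α)
  {K : Type} [Field K] {A : Type} [Ring A] [Algebra K A]
  (c : Q₁ → K) (hc0 : ∀ α : Q₁, c α ≠ 0) (hcg : ∀ α : Q₁, c (g α) = c α)
  (x : Q₁ → A)
  (hrel : ∀ α : Q₁, x (f α) * x (f (f α)) =
      c α • gpath x (⇑g) (g α) (Function.minimalPeriod (⇑g) α - 1)) :
    ∀ α : Q₁, x α * x (g α) * x (f (g α)) =
      c (f α) • (x α * x (f α) *
        gpath x (⇑g) (g (f α)) (Function.minimalPeriod (⇑g) (f α) - 2)) := by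
  -- bar (g β) = f β for every β
  have hbar_g : ∀ β : Q₁, bar (g β) = f β := by
    intro β
    have hmem : ∀ e : Q₁, s e = t β → e = f β ∨ e = g β := by
      intro e he
      by_contra h
      push_neg at h
      have hcard := hout (t β)
      have h3 : ({e, f β, g β} : Finset Q₁) ⊆ Finset.univ.filter fun a => s a = t β := by
        intro a ha
        simp only [Finset.mem_insert, Finset.mem_singleton] at ha
        rcases ha with rfl | rfl | rfl <;>
          simp [he, hsf, hsg]
      have hc3 : ({e, f β, g β} : Finset Q₁).card = 3 := by
        rw [Finset.card_insert_of_notMem (by simp [h.1, h.2]),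
          Finset.card_insert_of_notMem (by simp [hfg β])]
        simp
      have := Finset.card_le_card h3
      omega
    have hs : s (bar (g β)) = t β := by rw [hbar_s, hsg]
    rcases hmem _ hs with h | h
    · exact h
    · exact absurd h (hbar_ne (g β))
  -- bar (f β) = g β for every β
  have hbar_f : ∀ β : Q₁, bar (f β) = g β := by
    intro β
    have hmem : ∀ e : Q₁, s e = t β → e = f β ∨ e = g β := by
      intro e he
      by_contra h
      push_neg at h
      have hcard := hout (t β)
      have h3 : ({e, f β, g β} : Finset Q₁) ⊆ Finset.univ.filter fun a => s a = t β := by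
        intro a ha
        simp only [Finset.mem_insert, Finset.mem_singleton] at ha
        rcases ha with rfl | rfl | rfl <;>
          simp [he, hsf, hsg]
      have hc3 : ({e, f β, g β} : Finset Q₁).card = 3 := by
        rw [Finset.card_insert_of_notMem (by simp [h.1, h.2]),
          Finset.card_insert_of_notMem (by simp [hfg β])]
        simp
      have := Finset.card_le_card h3
      omega
    have hs : s (bar (f β)) = t β := by rw [hbar_s, hsf]
    rcases hmem _ hs with h | h
    · exact absurd h (hbar_ne (f β))
    · exact h
  intro α
  -- every point is periodic for g
  have hper : ∀ β : Q₁, β ∈ Function.periodicPts ⇑g := by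
    intro β
    refine Function.mk_mem_periodicPts (orderOf_pos g) ?_
    show g^[orderOf g] β = β
    rw [Equiv.Perm.iterate_eq_pow, pow_orderOf_eq_one]
    rfl
  -- key identity: g (f (f (g α))) = f α
  have hkey : g (f (f (g α))) = f α := by
    rw [← hbar_f (f (f (g α))), hf3, hbar_g]
  -- minimal period of f (f (g α)) equals that of f α
  have hnp : Function.minimalPeriod ⇑g (f (f (g α))) = Function.minimalPeriod ⇑g (f α) := by
    rw [← hkey, Function.minimalPeriod_apply (hper _)]
  -- c (f (f (g α))) = c (f α)
  have hcc : c (f (f (g α))) = c (f α) := by rw [← hkey, hcg]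
  -- minimal period of f α is at least 2
  have hpos : 0 < Function.minimalPeriod ⇑g (f α) :=
    Function.minimalPeriod_pos_of_mem_periodicPts (hper _)
  have hne1 : Function.minimalPeriod ⇑g (f α) ≠ 1 := by
    intro h1
    have hit : (⇑g)^[Function.minimalPeriod ⇑g (f α)] (f α) = f α :=
      Function.iterate_minimalPeriod
    rw [h1] at hit
    have hgf : g (f α) = f α := by simpa using hit
    have hl := hsg (f α)
    rw [hgf] at hl
    exact hnoloop (f α) hl
  have h2le : 2 ≤ Function.minimalPeriod ⇑g (f α) := by omega
  -- specialize the Jacobian relation at f (f (g α))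
  have h := hrel (f (f (g α)))
  rw [hf3, hkey, hnp, hcc] at h
  -- now h : x (g α) * x (f (g α)) = c (f α) • gpath x g (f α) (n - 1)
  have hsplit : gpath x (⇑g) (f α) (Function.minimalPeriod (⇑g) (f α) - 1) =
      x (f α) * gpath x (⇑g) (g (f α)) (Function.minimalPeriod (⇑g) (f α) - 2) := by
    have : Function.minimalPeriod (⇑g) (f α) - 1 =
        (Function.minimalPeriod (⇑g) (f α) - 2) + 1 := by omega
    rw [this, gpath_succ]
  rw [hsplit] at h
  calc x α * x (g α) * x (f (g α)) = x α * (x (g α) * x (f (g α))) := by rw [mul_assoc]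
    _ = x α * (c (f α) • (x (f α) * gpath x (⇑g) (g (f α))
          (Function.minimalPeriod (⇑g) (f α) - 2))) := by rw [h]
    _ = c (f α) • (x α * x (f α) * gpath x (⇑g) (g (f α))
          (Function.minimalPeriod (⇑g) (f α) - 2)) := by
        rw [mul_smul_comm, mul_assoc]
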